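/- If T is a locally finite semigroup and S is a semigroup containing T with S−T finite, then S is locally finite. -/

import Mathlib

open scoped Pointwise

/-- If `T` is a locally finite semigroup and `S` contains `T` as a subsemigroup
with finite complement, then `S` is locally finite. -/
theorem stmt3 {S : Type*} [Semigroup S] (T : Subsemigroup S)
    (hfin : ((T : Set S)ᶜ).Finite)
    (hlf : ∀ X : Set S, X ⊆ (T : Set S) → X.Finite →
      ((Subsemigroup.closure X : Subsemigroup S) : Set S).Finite) :
    ∀ X : Set S, X.Finite → ((Subsemigroup.closure X : Subsemigroup S) : Set S).Finite := by
  intro X hX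
  set C : Set S := (T : Set S)ᶜ with hC
  -- work in the monoid `WithOne S`
  set C₁ : Set (WithOne S) := insert 1 ((↑) '' C) with hC₁
  -- the candidate finite generating set inside T
  set G : Set S := {s : S | s ∈ T ∧ ∃ c ∈ C₁, ∃ a ∈ X, ∃ d ∈ C₁,
      (↑s : WithOne S) = c * ↑a * d} with hGdef
  have hC₁fin : C₁.Finite := (hfin.image _).insert 1
  have hGsub : G ⊆ (T : Set S) := fun s hs => hs.1
  have hGfin : G.Finite := by
    have himg : ((↑) '' G : Set (WithOne S)) ⊆ C₁ * ((↑) '' X) * C₁ := by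
      rintro _ ⟨s, ⟨-, c, hc, a, ha, d, hd, heq⟩, rfl⟩
      exact ⟨c * ↑a, ⟨c, hc, ↑a, ⟨a, ha, rfl⟩, rfl⟩, d, hd, heq.symm⟩
    have : ((↑) '' G : Set (WithOne S)).Finite :=
      Set.Finite.subset ((hC₁fin.mul (hX.image _)).mul hC₁fin) himg
    exact this.of_finite_image
      (Set.injOn_of_injective (fun _ _ => WithOne.coe_inj.mp))
  have hGcl : ((Subsemigroup.closure G : Subsemigroup S) : Set S).Finite :=
    hlf G hGsub hGfin
  -- helpers: multiplying a coe by any element of WithOne S yields a coe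
  have hcoeL : ∀ (c : WithOne S) (a : S), ∃ s : S, (↑s : WithOne S) = c * ↑a := by
    intro c a
    by_cases h : c = 1
    · exact ⟨a, by simp [h]⟩
    · obtain ⟨c₀, rfl⟩ := WithOne.ne_one_iff_exists.mp h
      exact ⟨c₀ * a, by simp⟩
  have hcoeR : ∀ (d : WithOne S) (p : S), ∃ r : S, (↑r : WithOne S) = ↑p * d := by
    intro d p
    by_cases h : d = 1
    · exact ⟨p, by simp [h]⟩
    · obtain ⟨d₀, rfl⟩ := WithOne.ne_one_iff_exists.mp h
      exact ⟨p * d₀, by simp⟩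
  have hcoeProd : ∀ (b : S) (l : List S),
      ∃ p : S, (↑p : WithOne S) = ((b :: l).map (↑)).prod := by
    intro b l
    induction l generalizing b with
    | nil => exact ⟨b, by simp⟩
    | cons x l ih =>
      obtain ⟨p, hp⟩ := ih x
      exact ⟨b * p, by rw [List.map_cons, List.prod_cons, ← hp, ← WithOne.coe_mul]⟩
  -- key lemma (Jura-style): if u ∈ T and ↑u = c * (word over X) * d with c,d ∈ C₁,
  -- then u ∈ closure G
  have key : ∀ n : ℕ, ∀ l : List S, l.length ≤ n → l ≠ [] → (∀ a ∈ l, a ∈ X) →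
      ∀ c ∈ C₁, ∀ d ∈ C₁, ∀ u : S, u ∈ T →
      (↑u : WithOne S) = c * (l.map (↑)).prod * d → u ∈ Subsemigroup.closure G := by
    intro n
    induction n with
    | zero =>
      intro l hl hne
      exact absurd (List.length_eq_zero_iff.mp (Nat.le_zero.mp hl)) hne
    | succ n ih =>
      intro l hl hne hlX c hc d hd u hu hequ
      match l, hne with
      | a :: l', _ =>
        have haX : a ∈ X := hlX a List.mem_cons_self
        obtain ⟨s, hs⟩ := hcoeL c a
        match l' with
        | [] =>
          -- u corresponds to c * a * d
          apply Subsemigroup.subset_closure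
          refine ⟨hu, c, hc, a, haX, d, hd, ?_⟩
          simpa using hequ
        | b :: l'' =>
          have hl'ne : (b :: l'') ≠ [] := by simp
          have hl'len : (b :: l'').length ≤ n := by
            have := hl; simp only [List.length_cons] at this ⊢; omega
          have hl'X : ∀ x ∈ b :: l'', x ∈ X := fun x hx => hlX x (List.mem_cons_of_mem _ hx)
          have hprod : ((a :: b :: l'').map ((↑) : S → WithOne S)).prod
              = ↑a * ((b :: l'').map (↑)).prod := by simp
          by_cases hsT : s ∈ T
          · -- s ∈ T; split on whether the remainder lies in T
            obtain ⟨p, hp⟩ := hcoeProd b l''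
            obtain ⟨r, hr⟩ := hcoeR d p
            have hur : u = s * r := by
              have h1 : (↑(s * r) : WithOne S) = ↑u := by
                rw [WithOne.coe_mul, hs, hr, hp, hequ, hprod]
                simp only [mul_assoc]
              exact (WithOne.coe_inj.mp h1).symm
            by_cases hrT : r ∈ T
            · have hsG : s ∈ Subsemigroup.closure G :=
                Subsemigroup.subset_closure
                  ⟨hsT, c, hc, a, haX, 1, Set.mem_insert _ _, by rw [mul_one, hs]⟩
              have hrG : r ∈ Subsemigroup.closure G :=
                ih (b :: l'') hl'len hl'ne hl'X 1 (Set.mem_insert _ _) d hd r hrT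
                  (by rw [one_mul, hr, hp])
              rw [hur]; exact mul_mem hsG hrG
            · -- the remainder is in C : u is a generator directly
              apply Subsemigroup.subset_closure
              refine ⟨hu, c, hc, a, haX, ↑r, Set.mem_insert_of_mem _ ⟨r, hrT, rfl⟩, ?_⟩
              rw [hequ, hprod, hr, hp]
              simp only [mul_assoc]
          · -- s ∈ C : absorb a into c
            have hsC : (↑s : WithOne S) ∈ C₁ := Set.mem_insert_of_mem _ ⟨s, hsT, rfl⟩
            refine ih (b :: l'') hl'len hl'ne hl'X (↑s) hsC d hd u hu ?_
            rw [hequ, hprod, ← mul_assoc, hs]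
  -- every element of closure X is (in WithOne S) a nonempty product of elements of X
  have hrep : ∀ u ∈ Subsemigroup.closure X, ∃ l : List S, l ≠ [] ∧ (∀ a ∈ l, a ∈ X) ∧
      (↑u : WithOne S) = (l.map (↑)).prod := by
    intro u hu
    induction hu using Subsemigroup.closure_induction with
    | mem x hx => exact ⟨[x], by simp, by simpa using hx, by simp⟩
    | mul x y hx hy ihx ihy =>
      obtain ⟨lx, hlxne, hlxX, hlx⟩ := ihx
      obtain ⟨ly, hlyne, hlyX, hly⟩ := ihy
      refine ⟨lx ++ ly, by simp [hlxne], ?_, ?_⟩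
      · intro a ha; rcases List.mem_append.mp ha with h | h
        · exact hlxX a h
        · exact hlyX a h
      · simp [hlx, hly]
  -- conclude
  have hsub : ((Subsemigroup.closure X : Subsemigroup S) : Set S) ⊆
      ((Subsemigroup.closure G : Subsemigroup S) : Set S) ∪ C := by
    intro u hu
    by_cases huT : u ∈ T
    · left
      obtain ⟨l, hlne, hlX, hl⟩ := hrep u hu
      exact key l.length l le_rfl hlne hlX 1 (Set.mem_insert _ _) 1 (Set.mem_insert _ _) u huT
        (by simpa using hl)
    · right; exact huT
  exact (hGcl.union hfin).subset hsub
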